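/- For each positive integer T, let (u_t^{(T)})_{t=1}^T be real random variables on a probability space (Ω_T, P_T) and assume that the laws of N_T = T^{-3/2} ∑_{t=1}^T (t − t̄_T) u_t^{(T)} converge weakly (as probability measures on ℝ) to some probability measure as T → ∞. Fix κ ∈ [0, 3/2), reals μ_2 and β̄_2, and define y_t^{(T)} = μ_2 + T^{-κ} β̄_2 t + u_t^{(T)}. Then T^{-3+κ} ∑_{t=1}^T (t − t̄_T)(y_t^{(T)} − ȳ^{(T)}) converges in probability to β̄_2 / 12, where ȳ^{(T)} = T^{-1} ∑_{t=1}^T y_t^{(T)}. -/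

import Mathlib

open Filter MeasureTheory

lemma sum_Icc_id' (T : ℕ) : ∑ t ∈ Finset.Icc 1 T, (t:ℝ) = T*(T+1)/2 := by
  induction T with
  | zero => simp
  | succ n ih =>
    rw [Finset.sum_Icc_succ_top (Nat.le_add_left 1 n), ih]
    push_cast; ring

lemma sum_Icc_sq' (T : ℕ) : ∑ t ∈ Finset.Icc 1 T, (t:ℝ)^2 = T*(T+1)*(2*T+1)/6 := by
  induction T with
  | zero => simp
  | succ n ih =>
    rw [Finset.sum_Icc_succ_top (Nat.le_add_left 1 n), ih]
    push_cast; ring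

lemma sum_center' (T : ℕ) : ∑ t ∈ Finset.Icc 1 T, ((t:ℝ) - ((T:ℝ)+1)/2) = 0 := by
  rw [Finset.sum_sub_distrib, sum_Icc_id', Finset.sum_const, Nat.card_Icc]
  simp only [nsmul_eq_mul]
  push_cast [Nat.add_sub_cancel]
  ring

lemma sum_center_mul' (T : ℕ) :
    ∑ t ∈ Finset.Icc 1 T, ((t:ℝ) - ((T:ℝ)+1)/2) * t = ((T:ℝ)^3 - T)/12 := by
  have : ∀ t ∈ Finset.Icc 1 T, ((t:ℝ) - ((T:ℝ)+1)/2) * t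
      = (t:ℝ)^2 - ((T:ℝ)+1)/2 * t := by intro t _; ring
  rw [Finset.sum_congr rfl this, Finset.sum_sub_distrib, sum_Icc_sq', ← Finset.mul_sum,
    sum_Icc_id']
  ring

lemma key_identity' (T : ℕ) (hT : 1 ≤ T) (κ μ2 βbar2 : ℝ) (v : ℕ → ℝ) :
    (T : ℝ) ^ (κ - 3) *
        ∑ t ∈ Finset.Icc 1 T, ((t : ℝ) - ((T : ℝ) + 1) / 2) *
          ((μ2 + (T : ℝ) ^ (-κ) * βbar2 * t + v t) -
            (T : ℝ)⁻¹ * ∑ s ∈ Finset.Icc 1 T,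
              (μ2 + (T : ℝ) ^ (-κ) * βbar2 * s + v s))
      - βbar2 / 12
    = -βbar2/(12*(T:ℝ)^2) +
        (T:ℝ)^(κ - 3/2) * ((T : ℝ) ^ (-(3 : ℝ) / 2) *
          ∑ t ∈ Finset.Icc 1 T, ((t : ℝ) - ((T : ℝ) + 1) / 2) * v t) := by
  have hT0 : (0:ℝ) < T := by exact_mod_cast hT
  set c : ℝ := (T : ℝ)⁻¹ * ∑ s ∈ Finset.Icc 1 T, (μ2 + (T : ℝ) ^ (-κ) * βbar2 * s + v s)
  have hsum : ∑ t ∈ Finset.Icc 1 T, ((t : ℝ) - ((T : ℝ) + 1) / 2) *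
      ((μ2 + (T : ℝ) ^ (-κ) * βbar2 * t + v t) - c)
      = (T : ℝ) ^ (-κ) * βbar2 * (((T:ℝ)^3 - T)/12)
        + ∑ t ∈ Finset.Icc 1 T, ((t : ℝ) - ((T : ℝ) + 1) / 2) * v t := by
    have e1 : ∀ t ∈ Finset.Icc 1 T, ((t : ℝ) - ((T : ℝ) + 1) / 2) *
        ((μ2 + (T : ℝ) ^ (-κ) * βbar2 * t + v t) - c)
        = (μ2 - c) * ((t:ℝ) - ((T:ℝ)+1)/2)
          + ((T : ℝ) ^ (-κ) * βbar2) * (((t:ℝ) - ((T:ℝ)+1)/2) * t)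
          + ((t:ℝ) - ((T:ℝ)+1)/2) * v t := by intro t _; ring
    rw [Finset.sum_congr rfl e1, Finset.sum_add_distrib, Finset.sum_add_distrib,
      ← Finset.mul_sum, ← Finset.mul_sum, sum_center', sum_center_mul']
    ring
  rw [hsum]
  have r2 : (T:ℝ)^(κ - 3/2) * (T:ℝ)^(-(3:ℝ)/2) = (T:ℝ)^(κ-3) := by
    rw [← Real.rpow_add hT0]; ring_nf
  have r1 : (T:ℝ)^(κ-3) * (T:ℝ)^(-κ) = ((T:ℝ)^3)⁻¹ := by
    rw [← Real.rpow_add hT0, show κ - 3 + -κ = -(3:ℝ) by ring,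
      show (3:ℝ) = ((3:ℕ):ℝ) by norm_num, Real.rpow_neg hT0.le, Real.rpow_natCast]
  rw [← mul_assoc, r2]
  set U := ∑ t ∈ Finset.Icc 1 T, ((t : ℝ) - ((T : ℝ) + 1) / 2) * v t
  have expand : (T:ℝ)^(κ-3) * ((T : ℝ) ^ (-κ) * βbar2 * (((T:ℝ)^3 - T)/12) + U)
      = ((T:ℝ)^(κ-3) * (T : ℝ) ^ (-κ)) * βbar2 * (((T:ℝ)^3 - T)/12) + (T:ℝ)^(κ-3) * U := by
    ring
  rw [expand, r1]
  have h3 : (T:ℝ)^3 ≠ 0 := by positivity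
  have h2 : (T:ℝ)^2 ≠ 0 := by positivity
  field_simp
  ring

noncomputable def cutoff (M : ℝ) : BoundedContinuousFunction ℝ ℝ :=
  BoundedContinuousFunction.ofNormedAddCommGroup
    (fun x => min 1 (max 0 (|x| - M)))
    (by fun_prop) 1
    (fun x => by
      rw [Real.norm_eq_abs, abs_of_nonneg (le_min one_pos.le (le_max_left _ _))]
      exact min_le_left _ _)

lemma cutoff_apply (M x : ℝ) : cutoff M x = min 1 (max 0 (|x| - M)) := rfl

lemma cutoff_nonneg (M x : ℝ) : 0 ≤ cutoff M x :=
  le_min one_pos.le (le_max_left _ _)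

lemma cutoff_le_one (M x : ℝ) : cutoff M x ≤ 1 := min_le_left _ _

lemma one_le_cutoff (M x : ℝ) (h : M + 1 ≤ |x|) : 1 ≤ cutoff M x := by
  rw [cutoff_apply]
  have : (1:ℝ) ≤ |x| - M := by linarith
  exact le_min le_rfl (le_max_of_le_right this)

lemma cutoff_eq_zero (M x : ℝ) (h : |x| < M) : cutoff M x = 0 := by
  rw [cutoff_apply, max_eq_left (by linarith), min_eq_right zero_le_one]

/-- Lemma 2, first claim (large to small trend slopes): if the laws of
`N_T = T^{−3/2} ∑_{t=1}^T (t − t̄_T) u_t^{(T)}` converge weakly to some probability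
measure, then for `y_t^{(T)} = μ₂ + T^{−κ} β̄₂ t + u_t^{(T)}` with `κ ∈ [0, 3/2)`,
`T^{−3+κ} ∑_{t=1}^T (t − t̄_T)(y_t^{(T)} − ȳ^{(T)}) →ₚ β̄₂ / 12`. -/
theorem iv_denominator_prob_limit
    (Ω : ℕ → Type) [∀ T, MeasurableSpace (Ω T)]
    (P : ∀ T, Measure (Ω T)) [∀ T, IsProbabilityMeasure (P T)]
    (u : ∀ T : ℕ, ℕ → Ω T → ℝ) (hmeas : ∀ T t, Measurable (u T t))
    (κ : ℝ) (hκ0 : 0 ≤ κ) (hκ1 : κ < 3 / 2) (μ2 βbar2 : ℝ)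
    (ν : Measure ℝ) (hν : IsProbabilityMeasure ν)
    (hconv : ∀ f : BoundedContinuousFunction ℝ ℝ,
      Tendsto (fun T : ℕ =>
          ∫ ω, f ((T : ℝ) ^ (-(3 : ℝ) / 2) *
            ∑ t ∈ Finset.Icc 1 T, ((t : ℝ) - ((T : ℝ) + 1) / 2) * u T t ω) ∂(P T))
        atTop (nhds (∫ x, f x ∂ν))) :
    ∀ δ > 0,
      Tendsto (fun T : ℕ =>
          P T {ω | δ <
            |(T : ℝ) ^ (κ - 3) *
                ∑ t ∈ Finset.Icc 1 T, ((t : ℝ) - ((T : ℝ) + 1) / 2) *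
                  ((μ2 + (T : ℝ) ^ (-κ) * βbar2 * t + u T t ω) -
                    (T : ℝ)⁻¹ * ∑ s ∈ Finset.Icc 1 T,
                      (μ2 + (T : ℝ) ^ (-κ) * βbar2 * s + u T s ω))
              - βbar2 / 12|})
        atTop (nhds 0) := by
  intro δ hδ
  -- the normalized statistic
  set N : (T : ℕ) → Ω T → ℝ := fun T ω => (T : ℝ) ^ (-(3 : ℝ) / 2) *
      ∑ t ∈ Finset.Icc 1 T, ((t : ℝ) - ((T : ℝ) + 1) / 2) * u T t ω with hNdef
  have hNmeas : ∀ T, Measurable (N T) := by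
    intro T
    exact measurable_const.mul
      (Finset.measurable_sum _ (fun t _ => measurable_const.mul (hmeas T t)))
  rw [ENNReal.tendsto_nhds_zero]
  intro ε hε
  obtain ⟨εr, hεr0, hεrle⟩ : ∃ εr : ℝ, 0 < εr ∧ ENNReal.ofReal εr ≤ ε := by
    rcases eq_or_ne ε ⊤ with h | h
    · exact ⟨1, one_pos, by simp [h]⟩
    · exact ⟨ε.toReal, ENNReal.toReal_pos hε.ne' h, by rw [ENNReal.ofReal_toReal h]⟩
  -- the tail sets
  set A : ℕ → Set ℝ := fun n => {x : ℝ | (n : ℝ) ≤ |x|} with hAdef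
  have hAm : ∀ n, MeasurableSet (A n) := fun n =>
    measurableSet_le measurable_const measurable_id.abs
  have hanti : Antitone A := by
    intro n m h x hx
    have hnm : (n:ℝ) ≤ (m:ℝ) := by exact_mod_cast h
    exact hnm.trans hx
  have hiInter : ⋂ n, A n = ∅ := by
    ext x
    simp only [Set.mem_iInter, Set.mem_empty_iff_false, iff_false, not_forall, hAdef,
      Set.mem_setOf_eq, not_le]
    obtain ⟨n, hn⟩ := exists_nat_gt |x|
    exact ⟨n, hn⟩
  have htail : Tendsto (fun n => ν (A n)) atTop (nhds 0) := by
    have := MeasureTheory.tendsto_measure_iInter_atTop (μ := ν)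
      (fun n => (hAm n).nullMeasurableSet) hanti ⟨0, measure_ne_top ν _⟩
    rwa [hiInter, measure_empty] at this
  obtain ⟨M₀, hM₀⟩ : ∃ M₀ : ℕ, ν (A M₀) < ENNReal.ofReal (εr / 4) :=
    (htail.eventually_lt_const (by positivity)).exists
  -- bound on the ν-integral of the cutoff
  have hν_int : ∫ x, cutoff M₀ x ∂ν ≤ εr / 4 := by
    have h1 : ∫ x, cutoff M₀ x ∂ν ≤ ∫ x, (A M₀).indicator (fun _ => (1:ℝ)) x ∂ν := by
      refine integral_mono ((cutoff M₀).integrable ν)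
        ((integrable_const 1).indicator (hAm M₀)) ?_
      intro x
      by_cases hx : x ∈ A M₀
      · rw [Set.indicator_of_mem hx]
        exact cutoff_le_one _ _
      · rw [Set.indicator_of_notMem hx]
        have : |x| < (M₀ : ℝ) := by
          simpa [hAdef, Set.mem_setOf_eq, not_le] using hx
        exact le_of_eq (cutoff_eq_zero _ _ this)
    have h2 : ∫ x, (A M₀).indicator (fun _ => (1:ℝ)) x ∂ν = (ν (A M₀)).toReal := by
      rw [integral_indicator_const _ (hAm M₀)]; simp [Measure.real]
    have h3 : (ν (A M₀)).toReal ≤ εr / 4 :=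
      ENNReal.toReal_le_of_le_ofReal (by positivity) hM₀.le
    calc ∫ x, cutoff M₀ x ∂ν ≤ (ν (A M₀)).toReal := h1.trans_eq h2
      _ ≤ εr / 4 := h3
  -- eventually the P-integral of the cutoff is small
  have hPint : ∀ᶠ T in atTop, ∫ ω, cutoff M₀ (N T ω) ∂(P T) < εr / 2 :=
    (hconv (cutoff M₀)).eventually_lt_const (by linarith)
  -- measure of tail of N_T bounded by the cutoff integral
  have hPB : ∀ T : ℕ, P T {ω | (M₀ : ℝ) + 1 ≤ |N T ω|}
      ≤ ENNReal.ofReal (∫ ω, cutoff M₀ (N T ω) ∂(P T)) := by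
    intro T
    set B : Set (Ω T) := {ω | (M₀ : ℝ) + 1 ≤ |N T ω|} with hBdef
    have hB : MeasurableSet B := measurableSet_le measurable_const (hNmeas T).abs
    have hint : Integrable (fun ω => cutoff M₀ (N T ω)) (P T) := by
      refine Integrable.mono' (integrable_const 1)
        (((cutoff M₀).continuous.measurable.comp (hNmeas T)).aestronglyMeasurable)
        (ae_of_all _ fun ω => ?_)
      rw [Real.norm_eq_abs, abs_of_nonneg (cutoff_nonneg _ _)]
      exact cutoff_le_one _ _
    have hmono : ∫ ω, B.indicator (fun _ => (1:ℝ)) ω ∂(P T)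
        ≤ ∫ ω, cutoff M₀ (N T ω) ∂(P T) := by
      refine integral_mono ((integrable_const 1).indicator hB) hint ?_
      intro ω
      by_cases hω : ω ∈ B
      · rw [Set.indicator_of_mem hω]
        exact one_le_cutoff _ _ hω
      · rw [Set.indicator_of_notMem hω]
        exact cutoff_nonneg _ _
    have heq : ∫ ω, B.indicator (fun _ => (1:ℝ)) ω ∂(P T) = (P T B).toReal := by
      rw [integral_indicator_const _ hB]; simp [Measure.real]
    calc P T B = ENNReal.ofReal ((P T B).toReal) := by
          rw [ENNReal.ofReal_toReal (measure_ne_top _ _)]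
      _ ≤ ENNReal.ofReal (∫ ω, cutoff M₀ (N T ω) ∂(P T)) := by
          exact ENNReal.ofReal_le_ofReal (heq ▸ hmono)
  -- eventual smallness of deterministic terms
  have hc : Tendsto (fun T : ℕ => βbar2 / 12 * (((T:ℝ)^2)⁻¹)) atTop (nhds 0) := by
    have h1 : Tendsto (fun T : ℕ => ((T:ℝ)^2)) atTop atTop :=
      (tendsto_pow_atTop (two_ne_zero)).comp tendsto_natCast_atTop_atTop
    simpa using h1.inv_tendsto_atTop.const_mul (βbar2 / 12)
  have hcev : ∀ᶠ T : ℕ in atTop, ‖βbar2 / 12 * (((T:ℝ)^2)⁻¹)‖ < δ / 2 :=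
    NormedAddCommGroup.tendsto_nhds_zero.mp hc (δ / 2) (by linarith)
  have ha : Tendsto (fun T : ℕ => (T:ℝ)^(κ - 3/2) * ((M₀:ℝ) + 1)) atTop (nhds 0) := by
    have h1 : Tendsto (fun T : ℕ => (T:ℝ)^(κ - 3/2)) atTop (nhds 0) := by
      have h2 := (tendsto_rpow_neg_atTop (show (0:ℝ) < 3/2 - κ by linarith)).comp
        (tendsto_natCast_atTop_atTop (R := ℝ))
      have : (fun T : ℕ => (T:ℝ)^(κ - 3/2))
          = (fun x : ℝ => x ^ (-(3/2 - κ))) ∘ (fun T : ℕ => (T:ℝ)) := by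
        funext T; simp [Function.comp]
      rw [this]; exact h2
    simpa using h1.mul_const ((M₀:ℝ) + 1)
  have haev : ∀ᶠ T : ℕ in atTop, ‖(T:ℝ)^(κ - 3/2) * ((M₀:ℝ) + 1)‖ < δ / 2 :=
    NormedAddCommGroup.tendsto_nhds_zero.mp ha (δ / 2) (by linarith)
  -- put everything together
  filter_upwards [eventually_ge_atTop 1, hcev, haev, hPint] with T hT1 hT2 hT3 hT4
  have hsub : {ω | δ <
      |(T : ℝ) ^ (κ - 3) *
          ∑ t ∈ Finset.Icc 1 T, ((t : ℝ) - ((T : ℝ) + 1) / 2) *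
            ((μ2 + (T : ℝ) ^ (-κ) * βbar2 * t + u T t ω) -
              (T : ℝ)⁻¹ * ∑ s ∈ Finset.Icc 1 T,
                (μ2 + (T : ℝ) ^ (-κ) * βbar2 * s + u T s ω))
        - βbar2 / 12|} ⊆ {ω | (M₀ : ℝ) + 1 ≤ |N T ω|} := by
    intro ω hω
    simp only [Set.mem_setOf_eq] at hω ⊢
    by_contra hcon
    push_neg at hcon
    rw [key_identity' T hT1 κ μ2 βbar2 (fun t => u T t ω)] at hω
    have ha0 : (0:ℝ) ≤ (T:ℝ)^(κ - 3/2) := Real.rpow_nonneg (Nat.cast_nonneg T) _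
    have hb1 : |(T:ℝ)^(κ - 3/2) * N T ω| ≤ (T:ℝ)^(κ - 3/2) * ((M₀:ℝ) + 1) := by
      rw [abs_mul, abs_of_nonneg ha0]
      exact mul_le_mul_of_nonneg_left hcon.le ha0
    have hb2 : (T:ℝ)^(κ - 3/2) * ((M₀:ℝ) + 1) < δ / 2 :=
      lt_of_le_of_lt (le_abs_self _) hT3
    have hb3 : |-βbar2/(12*(T:ℝ)^2)| < δ / 2 := by
      have : -βbar2/(12*(T:ℝ)^2) = -(βbar2 / 12 * (((T:ℝ)^2)⁻¹)) := by ring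
      rw [this, abs_neg]
      rwa [Real.norm_eq_abs] at hT2
    have : |(-βbar2/(12*(T:ℝ)^2)) + (T:ℝ)^(κ - 3/2) * N T ω| < δ := by
      calc |(-βbar2/(12*(T:ℝ)^2)) + (T:ℝ)^(κ - 3/2) * N T ω|
          ≤ |-βbar2/(12*(T:ℝ)^2)| + |(T:ℝ)^(κ - 3/2) * N T ω| := abs_add_le _ _
        _ < δ / 2 + δ / 2 := by
            exact add_lt_add_of_lt_of_le hb3 (hb1.trans hb2.le)
        _ = δ := by ring
    have hω' : δ < |-βbar2/(12*(T:ℝ)^2) + (T:ℝ)^(κ - 3/2) * N T ω| := hω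
    linarith [hω', this]
  calc P T _ ≤ P T {ω | (M₀ : ℝ) + 1 ≤ |N T ω|} := measure_mono hsub
    _ ≤ ENNReal.ofReal (∫ ω, cutoff M₀ (N T ω) ∂(P T)) := hPB T
    _ ≤ ENNReal.ofReal εr := ENNReal.ofReal_le_ofReal (by linarith)
    _ ≤ ε := hεrle
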